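/- Let D' be a finite set of at least two disks in the plane in strongly convex position, and let D be a disk of D' whose boundary arc on the convex hull of D' is nonempty. Let q be a point on that arc of ∂D lying on the boundary of the convex hull of D' that does not belong to any other disk of D'. Then the ray emanating from q in the direction away from the center of D is entirely contained in the additively weighted Voronoi cell of D; that is, every point on this ray is strictly closer (in signed distance |·p| - r) to D than to any other disk of D'. -/

import Mathlib

open Metric Set
open scoped RealInnerProductSpace

noncomputable section

abbrev Pt : Type := EuclideanSpace ℝ (Fin 2)

/-- A closed disk in the plane, given by a center and a radius. -/
structure Disk : Type where
  center : Pt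
  radius : ℝ

instance : DecidableEq Disk := Classical.decEq _

/-- The set of points of a disk (a closed ball). -/
def Disk.pts (D : Disk) : Set Pt := Metric.closedBall D.center D.radius

/-- The signed distance from a point `q` to a disk: `|q p| - r`. -/
def Disk.sd (D : Disk) (q : Pt) : ℝ := dist q D.center - D.radius

/-- Two disks are disjoint if the distance between their centers exceeds the sum of radii. -/
def Disk.Disj (D E : Disk) : Prop := D.radius + E.radius < dist D.center E.center

/-- The union of the points of a set of disks. -/
def diskUnion (𝒟 : Set Disk) : Set Pt := ⋃ D ∈ 𝒟, D.pts

/-- The convex hull of a set of disks. -/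
def diskHull (𝒟 : Set Disk) : Set Pt := convexHull ℝ (diskUnion 𝒟)

/-- The part of the boundary circle of `D` appearing on the boundary of the convex hull
of the disks of `𝒟`. -/
def hullArc (𝒟 : Set Disk) (D : Disk) : Set Pt :=
  Metric.sphere D.center D.radius ∩ frontier (diskHull 𝒟)

/-- Convex position: every disk's boundary contributes (at least) a point to the hull boundary. -/
def ConvexPos (𝒟 : Set Disk) : Prop := ∀ D ∈ 𝒟, (hullArc 𝒟 D).Nonempty

/-- Strongly convex position: every disk's boundary contributes exactly one maximal (nonempty)
arc to the hull boundary, i.e. its trace on the hull boundary is nonempty and connected. -/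
def StronglyConvexPos (𝒟 : Set Disk) : Prop := ∀ D ∈ 𝒟, IsConnected (hullArc 𝒟 D)

/-- An independent set of disks: pairwise disjoint. -/
def IndepSet (𝒟 : Set Disk) : Prop := ∀ A ∈ 𝒟, ∀ B ∈ 𝒟, A ≠ B → A.Disj B

/-- A strongly convex independent set. -/
def StronglyConvexIndep (𝒟 : Set Disk) : Prop := StronglyConvexPos 𝒟 ∧ IndepSet 𝒟

/-- Cross product (orientation test) of `a - o` and `b - o`. -/
def cross (o a b : Pt) : ℝ := (a 0 - o 0) * (b 1 - o 1) - (a 1 - o 1) * (b 0 - o 0)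

/-- `a, b, c` appear in strictly counterclockwise angular order around `o`. -/
def ccw3 (o a b c : Pt) : Prop := 0 < cross o a b ∧ 0 < cross o b c ∧ 0 < cross o c a

/-- `Dm` lies strictly between `Da` and `Db` in the counterclockwise order of the disks
along the boundary of the convex hull of `𝒟`. -/
def CCWBetween (𝒟 : Set Disk) (Da Dm Db : Disk) : Prop :=
  ∃ o ∈ interior (diskHull 𝒟), ∀ qa ∈ hullArc 𝒟 Da, ∀ qm ∈ hullArc 𝒟 Dm,
    ∀ qb ∈ hullArc 𝒟 Db, ccw3 o qa qm qb

/-- A point regarded as a radius-zero disk. -/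
def pointDisk (p : Pt) : Disk := ⟨p, 0⟩

/-- `m` is the midpoint of the circular arc `A` of a circle centered at `c`: some nonidentity
isometric involution of the plane (a reflection) fixes `c` and `m` and maps `A` onto itself. -/
def IsArcMidpoint (c : Pt) (A : Set Pt) (m : Pt) : Prop :=
  m ∈ A ∧ ∃ f : Pt ≃ᵢ Pt, f c = c ∧ f m = m ∧ (∀ x, f (f x) = x) ∧
    f ≠ IsometryEquiv.refl Pt ∧ f '' A = A

/-- Supporting functional at a frontier point bounds the whole convex set. -/
lemma support_le (s : Set Pt) (hs : Convex ℝ s) (a : Pt) (ha : a ∈ interior s)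
    (f : Pt →L[ℝ] ℝ) (c : ℝ) (hf : ∀ z ∈ interior s, f z < c) :
    ∀ y ∈ s, f y ≤ c := by
  intro y hy
  have hcont : Filter.Tendsto (fun ε : ℝ => f ((1 - ε) • y + ε • a)) (nhdsWithin 0 (Set.Ioi 0))
      (nhds (f y)) := by
    have h1 : Continuous fun ε : ℝ => f ((1 - ε) • y + ε • a) := by fun_prop
    have h2 := (h1.tendsto 0).mono_left (nhdsWithin_le_nhds (s := Set.Ioi (0:ℝ)))
    convert h2 using 2
    simp
  refine le_of_tendsto hcont ?_
  filter_upwards [Ioc_mem_nhdsGT_of_mem (Set.left_mem_Ico.2 one_pos)] with ε hε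
  exact (hf _ (hs.combo_self_interior_mem_interior hy ha (by linarith [hε.2]) hε.1 (by ring))).le

set_option maxHeartbeats 1000000 in
/-- the ray from a hull-arc point of a disk `D`, emanating away from the center
of `D`, stays strictly closer (in signed distance) to `D` than to any other disk. -/
theorem stmt3 (S : Set Disk) (hfin : S.Finite) (hcard : 2 ≤ S.ncard)
    (hsc : StronglyConvexPos S) (D : Disk) (hD : D ∈ S)
    (q : Pt) (hq : q ∈ hullArc S D) (hout : ∀ E ∈ S, E ≠ D → q ∉ E.pts) :
    ∀ t : ℝ, 0 ≤ t → ∀ E ∈ S, E ≠ D →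
      D.sd (q + t • (q - D.center)) < E.sd (q + t • (q - D.center)) := by
  intro t ht E hE hne
  set p := D.center with hp
  set r := D.radius with hrdef
  have hq1 : dist q p = r := hq.1
  have hr0 : (0:ℝ) ≤ r := hq1 ▸ dist_nonneg
  -- E's radius is nonnegative since its hull arc is nonempty
  obtain ⟨qE, hqE⟩ := (hsc E hE).nonempty
  have hsE0 : (0:ℝ) ≤ E.radius := hqE.1 ▸ dist_nonneg
  have hqfarE : E.radius < dist q E.center := by
    have := hout E hE hne
    rwa [Disk.pts, mem_closedBall, not_le] at this
  set x := q + t • (q - p) with hxdef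
  rcases eq_or_lt_of_le hr0 with hr | hr
  · -- degenerate case r = 0 : the ray is the single point q
    have hqp : q = p := by rwa [← hr, dist_eq_zero] at hq1
    have hxq : x = q := by rw [hxdef, hqp]; simp
    rw [hxq]
    simp only [Disk.sd, ← hp, ← hrdef, hq1, ← hr]
    linarith
  -- main case r > 0
  have hhullconv : Convex ℝ (diskHull S) := convex_convexHull ℝ _
  have hsubhull : ∀ F ∈ S, F.pts ⊆ diskHull S := fun F hF =>
    (Set.subset_biUnion_of_mem hF).trans (subset_convexHull ℝ _)
  have hpint : p ∈ interior (diskHull S) :=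
    interior_maximal (ball_subset_closedBall.trans (hsubhull D hD)) isOpen_ball
      (mem_ball_self hr)
  have hqni : q ∉ interior (diskHull S) := hq.2.2
  obtain ⟨f, hf⟩ := geometric_hahn_banach_open_point hhullconv.interior isOpen_interior hqni
  have hle : ∀ y ∈ diskHull S, f y ≤ f q :=
    support_le _ hhullconv p hpint f (f q) hf
  set w : Pt := (InnerProductSpace.toDual ℝ Pt).symm f with hwdef
  have hwapp : ∀ z : Pt, ⟪w, z⟫ = f z := fun z => InnerProductSpace.toDual_symm_apply
  have hw0 : w ≠ 0 := by
    intro h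
    have h1 := hwapp p
    have h2 := hwapp q
    rw [h, inner_zero_left] at h1 h2
    exact absurd (hf p hpint) (by rw [← h1, ← h2]; exact lt_irrefl 0)
  have hwpos : (0:ℝ) < ‖w‖ := norm_pos_iff.2 hw0
  -- key: for any ball inside the hull, the support functional bound
  have key : ∀ (c : Pt) (s : ℝ), 0 ≤ s → closedBall c s ⊆ diskHull S →
      ⟪w, c⟫ + s * ‖w‖ ≤ ⟪w, q⟫ := by
    intro c s hs hsub
    have hz : c + (s / ‖w‖) • w ∈ closedBall c s := by
      rw [mem_closedBall, dist_eq_norm]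
      have : c + (s / ‖w‖) • w - c = (s / ‖w‖) • w := by abel
      rw [this, norm_smul, Real.norm_eq_abs, abs_of_nonneg (div_nonneg hs hwpos.le),
        div_mul_cancel₀ _ hwpos.ne']
    have := hle _ (hsub hz)
    rw [← hwapp, ← hwapp] at this
    rw [inner_add_right, real_inner_smul_right, real_inner_self_eq_norm_mul_norm] at this
    calc ⟪w, c⟫ + s * ‖w‖ = ⟪w, c⟫ + s / ‖w‖ * (‖w‖ * ‖w‖) := by
          field_simp
      _ ≤ ⟪w, q⟫ := this
  -- the ray direction is parallel to w
  have hDkey := key p r hr0 (hsubhull D hD)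
  have hqpnorm : ‖q - p‖ = r := by rw [← dist_eq_norm]; exact hq1
  have hCS : ⟪w, q - p⟫ = ‖w‖ * ‖q - p‖ := by
    have h1 : ⟪w, q - p⟫ ≤ ‖w‖ * ‖q - p‖ := real_inner_le_norm w _
    have h2 : ⟪w, q - p⟫ ≥ ‖w‖ * ‖q - p‖ := by
      rw [inner_sub_right, hqpnorm]
      linarith [hDkey]
    linarith
  have hpar : ‖q - p‖ • w = ‖w‖ • (q - p) := inner_eq_norm_mul_iff_real.1 hCS
  have hdir : q - p = (r / ‖w‖) • w := by
    rw [hqpnorm] at hpar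
    rw [div_eq_inv_mul, mul_smul, hpar, smul_smul, inv_mul_cancel₀ hwpos.ne', one_smul]
  have hwqp : ⟪w, q - p⟫ = r * ‖w‖ := by rw [hCS, hqpnorm]; ring
  have hEkey := key E.center E.radius hsE0 (hsubhull E hE)
  set c := E.center with hc
  set s := E.radius with hsdef
  have hwxc : ⟪w, x - c⟫ = ⟪w, q - c⟫ + t * (r * ‖w‖) := by
    have hxc' : x - c = (q - c) + t • (q - p) := by rw [hxdef]; abel
    rw [hxc', inner_add_right, real_inner_smul_right, hwqp]
  have hwqc : s * ‖w‖ ≤ ⟪w, q - c⟫ := by rw [inner_sub_right]; linarith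
  have hlb : (s + t * r) * ‖w‖ ≤ ⟪w, x - c⟫ := by
    have he : (s + t * r) * ‖w‖ = s * ‖w‖ + t * (r * ‖w‖) := by ring
    rw [hwxc, he]
    linarith
  have hnormge : s + t * r ≤ ‖x - c‖ := by
    have h1 : ⟪w, x - c⟫ ≤ ‖w‖ * ‖x - c‖ := real_inner_le_norm _ _
    nlinarith
  have hstrict : s + t * r < ‖x - c‖ := by
    rcases hnormge.lt_or_eq with h | h
    · exact h
    · exfalso
      have hEeq : ⟪w, x - c⟫ = ‖w‖ * ‖x - c‖ := by
        have h1 : ⟪w, x - c⟫ ≤ ‖w‖ * ‖x - c‖ := real_inner_le_norm _ _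
        have h2 : ‖w‖ * ‖x - c‖ ≤ ⟪w, x - c⟫ := by rw [← h]; nlinarith
        linarith
      have hpar2 : ‖x - c‖ • w = ‖w‖ • (x - c) := inner_eq_norm_mul_iff_real.1 hEeq
      have hxc : x - c = (‖x - c‖ / ‖w‖) • w := by
        rw [div_eq_inv_mul, mul_smul, hpar2, smul_smul, inv_mul_cancel₀ hwpos.ne', one_smul]
      have hqc : q - c = (s / ‖w‖) • w := by
        have h3 : q - c = (x - c) - t • (q - p) := by rw [hxdef]; abel
        rw [h3, hxc, hdir, smul_smul, ← h, ← sub_smul]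
        congr 1
        field_simp
        ring
      have hdq : dist q c = s := by
        rw [dist_eq_norm, hqc, norm_smul, Real.norm_eq_abs,
          abs_of_nonneg (div_nonneg hsE0 hwpos.le), div_mul_cancel₀ _ hwpos.ne']
      linarith [hdq.le]
  have hxp : dist x p = (1 + t) * r := by
    have h4 : x - p = (1 + t) • (q - p) := by rw [hxdef, add_smul, one_smul]; abel
    rw [dist_eq_norm, h4, norm_smul, Real.norm_eq_abs, abs_of_nonneg (by linarith : (0:ℝ) ≤ 1 + t),
      hqpnorm]
  show D.sd x < E.sd x
  rw [Disk.sd, Disk.sd, ← hp, ← hrdef, ← hc, ← hsdef, hxp, dist_eq_norm]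
  have h5 : (1 + t) * r - r = t * r := by ring
  linarith
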